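/- Let ξ be a random function from a finite domain D to {-1,+1} such that for distinct values d ≠ d', ξ(d) and ξ(d') are independent and uniform on {-1,+1} (2-wise independence). Let X_A and X_B be the debiased sketch contributions of values d_A and d_B (from two sketches built with the same ξ), each of the form c_ε k B ξ(d) H[·,L] H[L,·] 1{J = j}, with independent randomness across the two sketches, conditioned on equal hash cells h_j(d_A) = h_j(d_B) = x. Then E[X_A · X_B] = 1 if d_A = d_B, and E[X_A · X_B] = 0 if d_A ≠ d_B. -/

import Mathlib

/-- The Sylvester Hadamard matrix of order `2^t`, defined recursively by
`H_1 = [1]` and `H_{2n} = [[H_n, H_n], [H_n, -H_n]]`. -/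
noncomputable def Had : (t : ℕ) → Matrix (Fin (2^t)) (Fin (2^t)) ℝ
  | 0 => fun _ _ => 1
  | (t+1) => fun i j =>
      (if 2^t ≤ (i : ℕ) ∧ 2^t ≤ (j : ℕ) then (-1 : ℝ) else 1) *
        Had t ⟨(i : ℕ) % 2^t, Nat.mod_lt _ (by positivity)⟩
              ⟨(j : ℕ) % 2^t, Nat.mod_lt _ (by positivity)⟩

/-- The probability mass of one sample `(J, L, B)` of the client's randomness:
`J` uniform on `Fin k`, `L` uniform on `Fin (2^t)`, and the sign bit `B` equal to `+1`
(`true`) with probability `e^ε/(1+e^ε)` and `-1` (`false`) with probability `1/(1+e^ε)`. -/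
noncomputable def sketchPMF (ε : ℝ) (k t : ℕ) (ω : Fin k × Fin (2^t) × Bool) : ℝ :=
  ((1 : ℝ)/k) * ((1 : ℝ)/2^t) *
    (if ω.2.2 then Real.exp ε / (1 + Real.exp ε) else 1 / (1 + Real.exp ε))

/-- The debiased contribution `c_ε · k · B · s · H_m[a, L] · H_m[L, x] · 1{J = j}`
of an entry encoded at hash cell `a` with sign `s` to the sketch cell `(j, x)`. -/
noncomputable def contrib (ε : ℝ) (k t : ℕ) (a x : Fin (2^t)) (s : ℝ) (j : Fin k)
    (ω : Fin k × Fin (2^t) × Bool) : ℝ :=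
  ((Real.exp ε + 1)/(Real.exp ε - 1)) * k * (if ω.2.2 then (1 : ℝ) else -1) * s *
    Had t a ω.2.1 * Had t ω.2.1 x * (if ω.1 = j then 1 else 0)

lemma had_symm (t : ℕ) (i j : Fin (2^t)) : Had t i j = Had t j i := by
  induction t with
  | zero => rfl
  | succ t ih => simp only [Had, ih, and_comm]

lemma nat_aux (N a b : ℕ) (ha : a < N + N) (hb : b < N + N)
    (h3 : a % N = b % N) (hiff : N ≤ a ↔ N ≤ b) : a = b := by
  rcases le_or_gt N a with hNa | hNa
  · have hNb : N ≤ b := hiff.1 hNa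
    have h4 : a % N = a - N := by
      rw [Nat.mod_eq_sub_mod hNa, Nat.mod_eq_of_lt (by omega)]
    have h5 : b % N = b - N := by
      rw [Nat.mod_eq_sub_mod hNb, Nat.mod_eq_of_lt (by omega)]
    omega
  · have hNb : b < N := lt_of_not_ge fun hc => absurd (hiff.2 hc) (not_le.2 hNa)
    rw [Nat.mod_eq_of_lt hNa, Nat.mod_eq_of_lt hNb] at h3
    omega

lemma had_orthoRow (t : ℕ) (i j : Fin (2^t)) :
    ∑ l, Had t i l * Had t j l = if i = j then ((2:ℝ)^t) else 0 := by
  induction t with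
  | zero =>
    have hij : i = j := Fin.ext (by omega)
    subst hij
    simp [Had]
  | succ t ih =>
    have hN : (0:ℕ) < 2^t := by positivity
    have hsplit : (2:ℕ)^(t+1) = 2^t + 2^t := by ring
    obtain ⟨e, he⟩ : ∃ e : Fin (2^t + 2^t) ≃ Fin (2^(t+1)),
        ∀ v : Fin (2^t + 2^t), ((e v : Fin (2^(t+1))) : ℕ) = (v:ℕ) :=
      ⟨finCongr hsplit.symm, fun v => rfl⟩
    rw [← Equiv.sum_comp e (fun l => Had (t+1) i l * Had (t+1) j l)]
    rw [Fin.sum_univ_add]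
    have hlow : ∀ l : Fin (2^t), ((e (Fin.castAdd (2^t) l) : Fin (2^(t+1))) : ℕ) = (l:ℕ) :=
      fun l => he _
    have hhigh : ∀ l : Fin (2^t),
        ((e (Fin.natAdd (2^t) l) : Fin (2^(t+1))) : ℕ) = 2^t + (l:ℕ) := fun l => he _
    set i' : Fin (2^t) := ⟨(i:ℕ) % 2^t, Nat.mod_lt _ hN⟩ with hi'
    set j' : Fin (2^t) := ⟨(j:ℕ) % 2^t, Nat.mod_lt _ hN⟩ with hj'
    set si : ℝ := if 2^t ≤ (i:ℕ) then -1 else 1 with hsi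
    set sj : ℝ := if 2^t ≤ (j:ℕ) then -1 else 1 with hsj
    have h1 : ∀ l : Fin (2^t),
        Had (t+1) i (e (Fin.castAdd (2^t) l)) * Had (t+1) j (e (Fin.castAdd (2^t) l))
        = Had t i' l * Had t j' l := by
      intro l
      have hl2 : ¬ 2^t ≤ (l:ℕ) := not_le.2 l.isLt
      simp only [Had, hlow l, Nat.mod_eq_of_lt l.isLt, hl2, and_false, if_false, one_mul]
      rfl
    have h2 : ∀ l : Fin (2^t),
        Had (t+1) i (e (Fin.natAdd (2^t) l)) * Had (t+1) j (e (Fin.natAdd (2^t) l))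
        = (si * sj) * (Had t i' l * Had t j' l) := by
      intro l
      have hm : (2^t + (l:ℕ)) % 2^t = (l:ℕ) := by
        rw [Nat.add_mod_left, Nat.mod_eq_of_lt l.isLt]
      simp only [Had, hhigh l, hm, le_add_iff_nonneg_right, Nat.zero_le, and_true]
      show (if 2^t ≤ (i:ℕ) then (-1:ℝ) else 1) * Had t i' l *
          ((if 2^t ≤ (j:ℕ) then (-1:ℝ) else 1) * Had t j' l) = _
      rw [← hsi, ← hsj]; ring
    calc (∑ l, Had (t+1) i (e (Fin.castAdd (2^t) l)) * Had (t+1) j (e (Fin.castAdd (2^t) l)))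
          + ∑ l, Had (t+1) i (e (Fin.natAdd (2^t) l)) * Had (t+1) j (e (Fin.natAdd (2^t) l))
        = (∑ l, Had t i' l * Had t j' l) + (si * sj) * ∑ l, Had t i' l * Had t j' l := by
          rw [Finset.sum_congr rfl (fun l _ => h1 l), Finset.sum_congr rfl (fun l _ => h2 l),
            ← Finset.mul_sum]
      _ = (1 + si * sj) * (if i' = j' then ((2:ℝ)^t) else 0) := by rw [ih]; ring
      _ = if i = j then ((2:ℝ)^(t+1)) else 0 := by
          have hi2 : (i:ℕ) < 2^t + 2^t := hsplit ▸ i.isLt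
          have hj2 : (j:ℕ) < 2^t + 2^t := hsplit ▸ j.isLt
          by_cases hi : 2^t ≤ (i:ℕ) <;> by_cases hj : 2^t ≤ (j:ℕ)
          · have hiff : i = j ↔ i' = j' := by
              constructor
              · rintro rfl; rfl
              · intro hh
                rw [hi', hj'] at hh
                have h3 : (i:ℕ) % 2^t = (j:ℕ) % 2^t := by simpa using hh
                exact Fin.ext (nat_aux _ _ _ hi2 hj2 h3 (iff_of_true hi hj))
            simp only [hsi, hsj, hi, hj, if_true]
            by_cases hij : i = j <;>
              simp only [hij, hiff.1, if_true, if_false, hiff, iff_true, pow_succ] <;>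
              [skip; rw [if_neg (fun hh => hij (hiff.2 hh))]] <;> ring
          · have hne : i ≠ j := fun hh => hj (hh ▸ hi)
            simp only [hsi, hsj, hi, hj, if_true, if_false, hne]
            ring
          · have hne : i ≠ j := fun hh => hi (by rw [hh]; exact hj)
            simp only [hsi, hsj, hi, hj, if_true, if_false, hne]
            ring
          · have hiff : i = j ↔ i' = j' := by
              constructor
              · rintro rfl; rfl
              · intro hh
                rw [hi', hj'] at hh
                have h3 : (i:ℕ) % 2^t = (j:ℕ) % 2^t := by simpa using hh
                exact Fin.ext (nat_aux _ _ _ hi2 hj2 h3 (iff_of_false hi hj))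
            simp only [hsi, hsj, hi, hj, if_false]
            by_cases hij : i = j <;>
              simp only [hij, hiff.1, if_true, if_false, hiff, iff_true, pow_succ] <;>
              [skip; rw [if_neg (fun hh => hij (hiff.2 hh))]] <;> ring

lemma exp_one (ε : ℝ) (hε : 0 < ε) (k t : ℕ) (hk : 0 < k) (x : Fin (2^t)) (s : ℝ)
    (j : Fin k) :
    ∑ ω : Fin k × Fin (2^t) × Bool, sketchPMF ε k t ω * contrib ε k t x x s j ω = s := by
  classical
  have hexp : (1:ℝ) < Real.exp ε := by nlinarith [Real.add_one_le_exp ε]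
  have h1 : Real.exp ε - 1 ≠ 0 := ne_of_gt (by linarith)
  have h2 : (1:ℝ) + Real.exp ε ≠ 0 := by positivity
  have hk' : (k:ℝ) ≠ 0 := Nat.cast_ne_zero.mpr hk.ne'
  have h2t : ((2:ℝ)^t) ≠ 0 := by positivity
  rw [Fintype.sum_prod_type]
  have hJ : ∀ (J : Fin k) (p : Fin (2^t) × Bool),
      sketchPMF ε k t (J, p) * contrib ε k t x x s j (J, p)
      = if J = j then sketchPMF ε k t (j, p) * contrib ε k t x x s j (j, p) else 0 := by
    intro J p
    by_cases hJj : J = j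
    · subst hJj; simp
    · simp [contrib, hJj]
  calc (∑ J : Fin k, ∑ p : Fin (2^t) × Bool,
          sketchPMF ε k t (J, p) * contrib ε k t x x s j (J, p))
      = ∑ J : Fin k, if J = j then
          (∑ p : Fin (2^t) × Bool, sketchPMF ε k t (j, p) * contrib ε k t x x s j (j, p))
          else 0 := by
        refine Finset.sum_congr rfl fun J _ => ?_
        rw [Finset.sum_congr rfl fun p _ => hJ J p]
        split <;> simp
    _ = ∑ p : Fin (2^t) × Bool, sketchPMF ε k t (j, p) * contrib ε k t x x s j (j, p) := by
        simp
    _ = ∑ L : Fin (2^t), (s / 2^t) * (Had t x L * Had t x L) := by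
        rw [Fintype.sum_prod_type]
        refine Finset.sum_congr rfl fun L _ => ?_
        rw [Fintype.sum_bool]
        simp only [sketchPMF, contrib, had_symm t L x, if_true, ite_true, ite_false, Bool.false_eq_true]
        field_simp
        ring
    _ = s := by
        rw [← Finset.mul_sum, had_orthoRow, if_pos rfl]
        field_simp

open Classical in
/-- Product of entries from two sketches: if `ξ` is a 2-wise independent uniform random
sign function and `X_A`, `X_B` are the debiased contributions of values `d_A`, `d_B`
(with independent per-user randomness) to the same cell `(j, x)` of the two sketches,
with `h(d_A) = h(d_B) = x`, then `E[X_A · X_B] = 1` if `d_A = d_B` and `0` otherwise. -/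
theorem stmt_9 (ε : ℝ) (hε : 0 < ε) (t k : ℕ) (hk : 0 < k) (D : Type)
    (Ξ : Type) [Fintype Ξ] (ρ : Ξ → ℝ) (hρ0 : ∀ e, 0 ≤ ρ e) (hρ1 : ∑ e, ρ e = 1)
    (ξ : Ξ → D → ℝ) (hξval : ∀ e x, ξ e x = 1 ∨ ξ e x = -1)
    (hξ2 : ∀ x x' : D, x ≠ x' → ∀ s s' : ℝ, (s = 1 ∨ s = -1) → (s' = 1 ∨ s' = -1) →
      (∑ e, if ξ e x = s ∧ ξ e x' = s' then ρ e else 0) = 1/4)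
    (h : D → Fin (2^t)) (j : Fin k) (x : Fin (2^t)) (dA dB : D)
    (hA : h dA = x) (hB : h dB = x) :
    ∑ e, ∑ ωA : Fin k × Fin (2^t) × Bool, ∑ ωB : Fin k × Fin (2^t) × Bool,
        ρ e * sketchPMF ε k t ωA * sketchPMF ε k t ωB *
          (contrib ε k t (h dA) x (ξ e dA) j ωA * contrib ε k t (h dB) x (ξ e dB) j ωB)
      = if dA = dB then 1 else 0 := by
  have inner : ∀ e : Ξ,
      (∑ ωA : Fin k × Fin (2^t) × Bool, ∑ ωB : Fin k × Fin (2^t) × Bool,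
        ρ e * sketchPMF ε k t ωA * sketchPMF ε k t ωB *
          (contrib ε k t (h dA) x (ξ e dA) j ωA * contrib ε k t (h dB) x (ξ e dB) j ωB))
      = ρ e * (ξ e dA * ξ e dB) := by
    intro e
    have hBsum : ∑ ωB : Fin k × Fin (2^t) × Bool,
        sketchPMF ε k t ωB * contrib ε k t (h dB) x (ξ e dB) j ωB = ξ e dB := by
      rw [hB]; exact exp_one ε hε k t hk x _ j
    have hAsum : ∑ ωA : Fin k × Fin (2^t) × Bool,
        sketchPMF ε k t ωA * contrib ε k t (h dA) x (ξ e dA) j ωA = ξ e dA := by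
      rw [hA]; exact exp_one ε hε k t hk x _ j
    calc (∑ ωA : Fin k × Fin (2^t) × Bool, ∑ ωB : Fin k × Fin (2^t) × Bool,
            ρ e * sketchPMF ε k t ωA * sketchPMF ε k t ωB *
              (contrib ε k t (h dA) x (ξ e dA) j ωA * contrib ε k t (h dB) x (ξ e dB) j ωB))
        = ∑ ωA : Fin k × Fin (2^t) × Bool,
            (ρ e * (sketchPMF ε k t ωA * contrib ε k t (h dA) x (ξ e dA) j ωA)) *
            ∑ ωB : Fin k × Fin (2^t) × Bool,
              sketchPMF ε k t ωB * contrib ε k t (h dB) x (ξ e dB) j ωB := by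
          refine Finset.sum_congr rfl fun ωA _ => ?_
          rw [Finset.mul_sum]
          exact Finset.sum_congr rfl fun ωB _ => by ring
      _ = (∑ ωA : Fin k × Fin (2^t) × Bool,
            ρ e * (sketchPMF ε k t ωA * contrib ε k t (h dA) x (ξ e dA) j ωA)) * ξ e dB := by
          rw [← Finset.sum_mul, hBsum]
      _ = ρ e * (ξ e dA * ξ e dB) := by
          rw [← Finset.mul_sum, hAsum]; ring
  rw [Finset.sum_congr rfl fun e _ => inner e]
  by_cases hd : dA = dB
  · subst hd
    rw [if_pos rfl, ← hρ1]
    refine Finset.sum_congr rfl fun e _ => ?_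
    rcases hξval e dA with h1 | h1 <;> rw [h1] <;> ring
  · rw [if_neg hd]
    have key : ∀ e : Ξ, ρ e * (ξ e dA * ξ e dB) =
        (if ξ e dA = 1 ∧ ξ e dB = 1 then ρ e else 0)
        + (if ξ e dA = -1 ∧ ξ e dB = -1 then ρ e else 0)
        - (if ξ e dA = 1 ∧ ξ e dB = -1 then ρ e else 0)
        - (if ξ e dA = -1 ∧ ξ e dB = 1 then ρ e else 0) := by
      intro e
      rcases hξval e dA with h1 | h1 <;> rcases hξval e dB with h2 | h2 <;>
        rw [h1, h2] <;> norm_num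
    rw [Finset.sum_congr rfl fun e _ => key e]
    rw [Finset.sum_sub_distrib, Finset.sum_sub_distrib, Finset.sum_add_distrib]
    rw [hξ2 _ _ hd 1 1 (Or.inl rfl) (Or.inl rfl),
        hξ2 _ _ hd (-1) (-1) (Or.inr rfl) (Or.inr rfl),
        hξ2 _ _ hd 1 (-1) (Or.inl rfl) (Or.inr rfl),
        hξ2 _ _ hd (-1) 1 (Or.inr rfl) (Or.inl rfl)]
    norm_num
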